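/- Let R(k) be a sequence of real symmetric positive semidefinite n×n matrices, λ ∈ (0,1), σ ≥ 0 and δ ≥ 0 natural numbers, and α > 0 such that R(k+1) ≽ λ·R(k) for all k with σ ≤ k < σ+δ, and Σ_{k=σ}^{σ+δ} R(k) ≽ α·I. Then R(σ+δ) ≽ ((1/λ − 1)/(1/λ^{δ+1} − 1))·α·I when δ ≥ 1, and R(σ) ≽ α·I when δ = 0; in particular R(σ+δ) is positive definite. -/

import Mathlib

open Matrix Finset

private lemma psd_smul {n : ℕ} {A : Matrix (Fin n) (Fin n) ℝ} (h : A.PosSemidef)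
    {c : ℝ} (hc : 0 ≤ c) : (c • A).PosSemidef := by
  refine ⟨?_, fun x => ?_⟩
  · unfold Matrix.IsHermitian
    rw [conjTranspose_smul, h.1.eq]
    simp
  · exact (h.smul hc).2 x

private lemma psd_sum {n : ℕ} {ι : Type*} (s : Finset ι)
    (f : ι → Matrix (Fin n) (Fin n) ℝ) (h : ∀ i ∈ s, (f i).PosSemidef) :
    (∑ i ∈ s, f i).PosSemidef := by
  classical
  induction s using Finset.induction_on with
  | empty => simpa using Matrix.PosSemidef.zero
  | @insert a s' hns ih =>
    rw [Finset.sum_insert hns]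
    exact (h a (Finset.mem_insert_self a s')).add
      (ih fun i hi => h i (Finset.mem_insert_of_mem hi))

private lemma posdef_smul_one {n : ℕ} {c : ℝ} (hc : 0 < c) :
    (c • (1 : Matrix (Fin n) (Fin n) ℝ)).PosDef := by
  refine ⟨?_, fun x hx => ?_⟩
  · unfold Matrix.IsHermitian
    rw [conjTranspose_smul, conjTranspose_one]
    simp
  · exact ((Matrix.PosDef.one (n := Fin n) (R := ℝ)).smul hc).2 hx

/-- Lower bound on the information matrix: if `R(k+1) ≽ λ R(k)` on the window
`[σ, σ+δ)` and `∑_{k=σ}^{σ+δ} R(k) ≽ α I`, then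
`R(σ+δ) ≽ ((1/λ − 1)/(1/λ^{δ+1} − 1)) α I` when `δ ≥ 1`, and `R(σ) ≽ α I` when
`δ = 0`; in particular `R(σ+δ)` is positive definite. -/
theorem information_matrix_lower_bound {n : ℕ}
    (R : ℕ → Matrix (Fin n) (Fin n) ℝ) (hpsd : ∀ k, (R k).PosSemidef)
    (lam : ℝ) (hlam0 : 0 < lam) (hlam1 : lam < 1)
    (σ δ : ℕ) (α : ℝ) (hα : 0 < α)
    (hstep : ∀ k, σ ≤ k → k < σ + δ → Matrix.PosSemidef (R (k + 1) - lam • R k))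
    (hsum : Matrix.PosSemidef
      ((∑ k ∈ Finset.Icc σ (σ + δ), R k) - α • (1 : Matrix (Fin n) (Fin n) ℝ))) :
    (1 ≤ δ → Matrix.PosSemidef
      (R (σ + δ) - ((1 / lam - 1) / (1 / lam ^ (δ + 1) - 1) * α)
        • (1 : Matrix (Fin n) (Fin n) ℝ))) ∧
    (δ = 0 → Matrix.PosSemidef (R σ - α • (1 : Matrix (Fin n) (Fin n) ℝ))) ∧
    (R (σ + δ)).PosDef := by
  have hlam_ne : lam ≠ 0 := ne_of_gt hlam0
  -- Step 1: R(σ+δ) ≽ lam^j • R(σ+δ-j) for j ≤ δ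
  have key : ∀ j, j ≤ δ → (R (σ + δ) - lam ^ j • R (σ + δ - j)).PosSemidef := by
    intro j
    induction j with
    | zero => intro _; simp [Matrix.PosSemidef.zero]
    | succ j ih =>
      intro hj
      have hstep' := hstep (σ + δ - (j + 1)) (by omega) (by omega)
      have hidx : σ + δ - (j + 1) + 1 = σ + δ - j := by omega
      rw [hidx] at hstep'
      have heq : R (σ + δ) - lam ^ (j + 1) • R (σ + δ - (j + 1)) =
          (R (σ + δ) - lam ^ j • R (σ + δ - j)) +
          lam ^ j • (R (σ + δ - j) - lam • R (σ + δ - (j + 1))) := by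
        rw [smul_sub, smul_smul, ← pow_succ]
        abel
      rw [heq]
      exact (ih (by omega)).add (psd_smul hstep' (by positivity))
  -- Step 2: scaled version: lam⁻¹^(δ-i) • R(σ+δ) ≽ R(σ+i) for i ≤ δ
  have key2 : ∀ i ∈ Finset.range (δ + 1),
      ((lam⁻¹ ^ (δ - i)) • R (σ + δ) - R (σ + i)).PosSemidef := by
    intro i hi
    rw [Finset.mem_range] at hi
    have hk := key (δ - i) (by omega)
    have hidx : σ + δ - (δ - i) = σ + i := by omega
    rw [hidx] at hk
    have := psd_smul hk (c := lam⁻¹ ^ (δ - i)) (by positivity)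
    have heq : (lam⁻¹ ^ (δ - i)) • (R (σ + δ) - lam ^ (δ - i) • R (σ + i)) =
        (lam⁻¹ ^ (δ - i)) • R (σ + δ) - R (σ + i) := by
      rw [smul_sub, smul_smul, ← mul_pow, inv_mul_cancel₀ hlam_ne, one_pow, one_smul]
    rwa [heq] at this
  -- the geometric sum
  set S : ℝ := ∑ i ∈ Finset.range (δ + 1), lam⁻¹ ^ i with hSdef
  have hS_pos : 0 < S := by
    apply Finset.sum_pos (fun i _ => by positivity) ⟨0, Finset.mem_range.mpr (by omega)⟩
  -- rewrite hsum over range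
  have hsum' : Matrix.PosSemidef
      ((∑ i ∈ Finset.range (δ + 1), R (σ + i)) - α • (1 : Matrix (Fin n) (Fin n) ℝ)) := by
    have : ∑ k ∈ Finset.Icc σ (σ + δ), R k = ∑ i ∈ Finset.range (δ + 1), R (σ + i) := by
      rw [← Finset.Ico_add_one_right_eq_Icc, Finset.sum_Ico_eq_sum_range]
      have h1 : σ + δ + 1 - σ = δ + 1 := by omega
      rw [h1]
    rwa [this] at hsum
  -- sum the scaled inequalities
  have hsumscaled : (S • R (σ + δ) - ∑ i ∈ Finset.range (δ + 1), R (σ + i)).PosSemidef := by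
    have := psd_sum (Finset.range (δ + 1))
      (fun i => (lam⁻¹ ^ (δ - i)) • R (σ + δ) - R (σ + i)) key2
    have heq : ∑ i ∈ Finset.range (δ + 1), ((lam⁻¹ ^ (δ - i)) • R (σ + δ) - R (σ + i)) =
        S • R (σ + δ) - ∑ i ∈ Finset.range (δ + 1), R (σ + i) := by
      rw [Finset.sum_sub_distrib, ← Finset.sum_smul, hSdef]
      rw [← Finset.sum_range_reflect (fun i => lam⁻¹ ^ i) (δ + 1)]
      norm_num
    rwa [heq] at this
  -- combine
  have hcomb : (S • R (σ + δ) - α • (1 : Matrix (Fin n) (Fin n) ℝ)).PosSemidef := by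
    have := hsumscaled.add hsum'
    have heq : (S • R (σ + δ) - ∑ i ∈ Finset.range (δ + 1), R (σ + i)) +
        ((∑ i ∈ Finset.range (δ + 1), R (σ + i)) - α • (1 : Matrix (Fin n) (Fin n) ℝ)) =
        S • R (σ + δ) - α • (1 : Matrix (Fin n) (Fin n) ℝ) := by abel
    rwa [heq] at this
  -- divide by S
  have hfinal : (R (σ + δ) - (S⁻¹ * α) • (1 : Matrix (Fin n) (Fin n) ℝ)).PosSemidef := by
    have := psd_smul hcomb (c := S⁻¹) (by positivity)
    have heq : S⁻¹ • (S • R (σ + δ) - α • (1 : Matrix (Fin n) (Fin n) ℝ)) =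
        R (σ + δ) - (S⁻¹ * α) • (1 : Matrix (Fin n) (Fin n) ℝ) := by
      rw [smul_sub, smul_smul, smul_smul, inv_mul_cancel₀ (ne_of_gt hS_pos), one_smul]
    rwa [heq] at this
  -- compute S⁻¹
  have hSval : S = (1 / lam ^ (δ + 1) - 1) / (1 / lam - 1) := by
    rw [hSdef, geom_sum_eq (by
      intro h
      rw [inv_eq_one] at h
      exact absurd h (ne_of_lt hlam1))]
    rw [inv_pow, one_div, one_div]
  have hd1 : (0 : ℝ) < 1 / lam - 1 := by
    rw [one_div, sub_pos]
    exact (one_lt_inv₀ hlam0).mpr hlam1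
  have hd2 : (0 : ℝ) < 1 / lam ^ (δ + 1) - 1 := by
    rw [one_div, sub_pos, ← inv_pow]
    exact one_lt_pow₀ ((one_lt_inv₀ hlam0).mpr hlam1) (by omega)
  have hSinv : S⁻¹ = (1 / lam - 1) / (1 / lam ^ (δ + 1) - 1) := by
    rw [hSval, one_div, inv_div]
  refine ⟨fun _ => ?_, fun h0 => ?_, ?_⟩
  · rwa [hSinv] at hfinal
  · subst h0
    simpa using hsum
  · have hc : 0 < S⁻¹ * α := by positivity
    have := Matrix.PosDef.posSemidef_add hfinal (posdef_smul_one hc)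
    rwa [sub_add_cancel] at this
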